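/- Let (χ_k) be the Haar system on [0,1] and let δ > 0. Then for every function f ∈ Lip1 on [0,1], the series Σ_{k=1}^∞ |c_k(f)| · k^{1/2} / (log(k+1))^{1+δ} converges, where c_k(f) = ∫_0^1 f(x)χ_k(x) dx. -/

import Mathlib

open MeasureTheory Set Filter

noncomputable section

/-- The Haar system on `[0,1]`: `haarFn 1 = 1`, and for `k = 2^s + l` with
`s ≥ 0`, `1 ≤ l ≤ 2^s`, it takes the values `2^{s/2}`, `-2^{s/2}`, `0` on the
corresponding intervals. -/
def haarFn (k : ℕ) (x : ℝ) : ℝ :=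
  if k = 0 then 0
  else if k = 1 then 1
  else
    let s := Nat.log 2 (k - 1)
    let l := k - 2 ^ s
    if (2 * (l:ℝ) - 2) / 2 ^ (s + 1) < x ∧ x < (2 * (l:ℝ) - 1) / 2 ^ (s + 1) then
      Real.sqrt (2 ^ s)
    else if (2 * (l:ℝ) - 1) / 2 ^ (s + 1) < x ∧ x < (2 * (l:ℝ)) / 2 ^ (s + 1) then
      -Real.sqrt (2 ^ s)
    else 0

/-- `f` belongs to the class Lip 1 on `[0,1]`. -/
def Lip1 (f : ℝ → ℝ) : Prop :=
  ∃ M > (0:ℝ), ∀ x ∈ Icc (0:ℝ) 1, ∀ y ∈ Icc (0:ℝ) 1, |f x - f y| ≤ M * |x - y|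


lemma haarFn_two_le (k : ℕ) (hk : 2 ≤ k) (x : ℝ) :
    haarFn k x =
      (if (2 * ((k - 2 ^ Nat.log 2 (k - 1) : ℕ):ℝ) - 2) / 2 ^ (Nat.log 2 (k - 1) + 1) < x ∧
          x < (2 * ((k - 2 ^ Nat.log 2 (k - 1) : ℕ):ℝ) - 1) / 2 ^ (Nat.log 2 (k - 1) + 1) then
        Real.sqrt (2 ^ Nat.log 2 (k - 1))
      else if (2 * ((k - 2 ^ Nat.log 2 (k - 1) : ℕ):ℝ) - 1) / 2 ^ (Nat.log 2 (k - 1) + 1) < x ∧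
          x < (2 * ((k - 2 ^ Nat.log 2 (k - 1) : ℕ):ℝ)) / 2 ^ (Nat.log 2 (k - 1) + 1) then
        -Real.sqrt (2 ^ Nat.log 2 (k - 1))
      else 0) := by
  rw [haarFn, if_neg (by omega : ¬ k = 0), if_neg (by omega : ¬ k = 1)]

lemma haar_integral_bound (f : ℝ → ℝ) (M : ℝ) (hM : 0 ≤ M)
    (hLip : ∀ x ∈ Icc (0:ℝ) 1, ∀ y ∈ Icc (0:ℝ) 1, |f x - f y| ≤ M * |x - y|)
    (k : ℕ) (hk : 2 ≤ k) :
    |∫ x in (0:ℝ)..1, f x * haarFn k x| ≤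
      M * Real.sqrt (2 ^ Nat.log 2 (k - 1)) * (1 / 2 ^ (Nat.log 2 (k - 1) + 1)) ^ 2 := by
  set s := Nat.log 2 (k - 1) with hs
  set l := k - 2 ^ s with hldef
  have h1 : 2 ^ s ≤ k - 1 := Nat.pow_log_le_self 2 (by omega)
  have h2 : k - 1 < 2 ^ (s + 1) := Nat.lt_pow_succ_log_self (by norm_num) _
  have hps : (2:ℕ) ^ (s + 1) = 2 * 2 ^ s := by ring
  have hl1 : 1 ≤ l := by omega
  have hl2 : l ≤ 2 ^ s := by omega
  -- real quantities
  set h : ℝ := 1 / 2 ^ (s + 1) with hh'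
  set A : ℝ := (2 * (l:ℝ) - 2) / 2 ^ (s + 1) with hA'
  set r : ℝ := Real.sqrt (2 ^ s) with hr'
  have hpow : (0:ℝ) < 2 ^ (s + 1) := by positivity
  have hh : 0 < h := by rw [hh']; positivity
  have hlR1 : (1:ℝ) ≤ (l:ℝ) := by exact_mod_cast hl1
  have hlR2 : (l:ℝ) ≤ 2 ^ s := by exact_mod_cast hl2
  have hpowR : ((2:ℝ)) ^ (s+1) = 2 * 2 ^ s := by ring
  have hA0 : 0 ≤ A := by
    rw [hA']; apply div_nonneg _ hpow.le; linarith
  have hC1 : A + h + h ≤ 1 := by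
    rw [hA', hh']
    rw [← add_div, ← add_div, div_le_one hpow]
    rw [hpowR]; linarith
  have hB1 : A + h ≤ 1 := by linarith
  have hBeq : (2 * (l:ℝ) - 1) / 2 ^ (s + 1) = A + h := by
    rw [hA', hh', ← add_div]; ring_nf
  have hCeq : (2 * (l:ℝ)) / 2 ^ (s + 1) = A + h + h := by
    rw [hA', hh', ← add_div, ← add_div]; ring_nf
  have hr : 0 ≤ r := Real.sqrt_nonneg _
  -- pointwise identity
  have hpt : ∀ x, f x * haarFn k x =
      (Ioo A (A+h)).indicator (fun y => r * f y) x
      + (Ioo (A+h) (A+h+h)).indicator (fun y => -r * f y) x := by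
    intro x
    rw [haarFn_two_le k hk x, ← hs, ← hldef, ← hA', ← hr', hBeq, hCeq]
    by_cases hx1 : A < x ∧ x < A + h
    · rw [if_pos hx1, indicator_of_mem (by exact hx1) _,
        indicator_of_notMem (by intro hmem; exact absurd hmem.1 (by linarith [hx1.2]) : x ∉ Ioo (A+h) (A+h+h))]
      ring
    · rw [if_neg hx1]
      by_cases hx2 : A + h < x ∧ x < A + h + h
      · rw [if_pos hx2, indicator_of_notMem (by intro hmem; exact absurd hmem.2 (by linarith [hx2.1]) : x ∉ Ioo A (A+h)),
          indicator_of_mem (by exact hx2)]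
        ring
      · rw [if_neg hx2, indicator_of_notMem (fun hmem => hx1 hmem : x ∉ Ioo A (A+h)), indicator_of_notMem (fun hmem => hx2 hmem : x ∉ Ioo (A+h) (A+h+h))]
        ring
  -- continuity and integrability
  have hcont : ContinuousOn f (Icc 0 1) := by
    have : LipschitzOnWith M.toNNReal f (Icc 0 1) := by
      apply LipschitzOnWith.of_dist_le_mul
      intro x hx y hy
      rw [Real.dist_eq, Real.dist_eq, Real.coe_toNNReal M hM]
      exact hLip x hx y hy
    exact this.continuousOn
  have hint : ∀ a b : ℝ, 0 ≤ a → b ≤ 1 → IntegrableOn f (Ioo a b) := by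
    intro a b ha hb
    rcases le_or_gt b a with hba | hab
    · rw [Ioo_eq_empty (by linarith)]; exact integrableOn_empty
    · exact ((hcont.mono (Icc_subset_Icc ha hb)).integrableOn_Icc).mono_set Ioo_subset_Icc_self
  have hsub1 : Ioo A (A+h) ⊆ Ioc (0:ℝ) 1 := fun x hx => ⟨by linarith [hx.1], by linarith [hx.2]⟩
  have hsub2 : Ioo (A+h) (A+h+h) ⊆ Ioc (0:ℝ) 1 := fun x hx => ⟨by linarith [hx.1], by linarith [hx.2]⟩
  have hind : ∀ (a b : ℝ) (c : ℝ), 0 ≤ a → b ≤ 1 →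
      Integrable (fun x => (Ioo a b).indicator (fun y => c * f y) x) (volume.restrict (Ioc 0 1)) := by
    intro a b c ha hb
    rw [integrable_indicator_iff measurableSet_Ioo]
    have : IntegrableOn (fun y => c * f y) (Ioo a b) volume := (hint a b ha hb).const_mul c
    have h2' : IntegrableOn (fun y => c * f y) (Ioo a b ∩ Ioc 0 1) volume :=
      this.mono_set inter_subset_left
    rw [IntegrableOn, Measure.restrict_restrict measurableSet_Ioo]
    exact h2'
  -- compute the integral
  have hAB : ∀ (a b : ℝ) (c : ℝ), Ioo a b ⊆ Ioc (0:ℝ) 1 → a ≤ b →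
      ∫ x in Ioc (0:ℝ) 1, (Ioo a b).indicator (fun y => c * f y) x = c * ∫ x in a..b, f x := by
    intro a b c hsub hab
    rw [setIntegral_indicator measurableSet_Ioo,
      inter_eq_self_of_subset_right hsub,
      intervalIntegral.integral_of_le hab, integral_Ioc_eq_integral_Ioo,
      integral_const_mul]
  have hcomp : ∫ x in (0:ℝ)..1, f x * haarFn k x
      = (r * ∫ x in A..(A+h), f x) + (-r) * ∫ x in (A+h)..(A+h+h), f x := by
    rw [intervalIntegral.integral_of_le (by norm_num : (0:ℝ) ≤ 1)]
    rw [setIntegral_congr_fun measurableSet_Ioc (fun x _ => hpt x)]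
    rw [integral_add (hind A (A+h) r hA0 hB1) (hind (A+h) (A+h+h) (-r) (by linarith) hC1)]
    rw [hAB A (A+h) r hsub1 (by linarith), hAB (A+h) (A+h+h) (-r) hsub2 (by linarith)]
  -- the shift
  have hshift : ∫ x in (A+h)..(A+h+h), f x = ∫ x in A..(A+h), f (x + h) := by
    rw [intervalIntegral.integral_comp_add_right (fun x => f x) h]
  have hii1 : IntervalIntegrable f volume A (A+h) := by
    apply ContinuousOn.intervalIntegrable
    rw [uIcc_of_le (by linarith)]
    exact hcont.mono (Icc_subset_Icc hA0 hB1)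
  have hii2 : IntervalIntegrable (fun x => f (x + h)) volume A (A+h) := by
    apply ContinuousOn.intervalIntegrable
    rw [uIcc_of_le (by linarith)]
    apply hcont.comp ((continuous_id.add continuous_const).continuousOn)
    intro x hx
    exact ⟨by simp only [id, Pi.add_apply]; linarith [hx.1], by simp only [id, Pi.add_apply]; linarith [hx.2]⟩
  have hdiff : (∫ x in A..(A+h), f x) - ∫ x in A..(A+h), f (x + h)
      = ∫ x in A..(A+h), (f x - f (x + h)) := (intervalIntegral.integral_sub hii1 hii2).symm
  have hbnd : |∫ x in A..(A+h), (f x - f (x + h))| ≤ (M * h) * h := by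
    have := intervalIntegral.norm_integral_le_of_norm_le_const (C := M * h)
      (f := fun x => f x - f (x + h)) (a := A) (b := A + h) ?_
    · rw [Real.norm_eq_abs] at this
      calc |∫ x in A..(A+h), (f x - f (x + h))| ≤ M * h * |A + h - A| := this
        _ = M * h * h := by rw [show A + h - A = h by ring, abs_of_pos hh]
    · intro x hx
      rw [uIoc_of_le (by linarith : A ≤ A + h)] at hx
      have hx01 : x ∈ Icc (0:ℝ) 1 := ⟨by linarith [hx.1], by linarith [hx.2]⟩
      have hxh01 : x + h ∈ Icc (0:ℝ) 1 := ⟨by linarith [hx.1], by linarith [hx.2]⟩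
      rw [Real.norm_eq_abs]
      calc |f x - f (x + h)| ≤ M * |x - (x + h)| := hLip x hx01 (x+h) hxh01
        _ = M * h := by rw [show x - (x + h) = -h by ring, abs_neg, abs_of_pos hh]
  -- conclude
  rw [hcomp, hshift]
  have heq : (r * ∫ x in A..(A+h), f x) + (-r) * ∫ x in A..(A+h), f (x + h)
      = r * ((∫ x in A..(A+h), f x) - ∫ x in A..(A+h), f (x + h)) := by ring
  rw [heq, hdiff, abs_mul, abs_of_nonneg hr]
  calc r * |∫ x in A..(A+h), (f x - f (x + h))| ≤ r * ((M * h) * h) :=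
        mul_le_mul_of_nonneg_left hbnd hr
    _ = M * r * h ^ 2 := by ring

lemma bertrand_sum (δ : ℝ) (hδ : 0 < δ) :
    Summable (fun n : ℕ => 1 / ((n : ℝ) * Real.log ((n : ℝ) + 1) ^ ((1:ℝ) + δ))) := by
  have hnonneg : ∀ n : ℕ, 0 ≤ 1 / ((n : ℝ) * Real.log ((n : ℝ) + 1) ^ ((1:ℝ) + δ)) := by
    intro n
    apply div_nonneg zero_le_one
    exact mul_nonneg (Nat.cast_nonneg n) (Real.rpow_nonneg (Real.log_nonneg (by linarith [Nat.cast_nonneg (α := ℝ) n])) _)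
  rw [← summable_condensed_iff_of_nonneg hnonneg ?anti]
  case anti =>
    intro m n hm hmn
    apply one_div_le_one_div_of_le
    · have h1 : (1:ℝ) ≤ (m:ℝ) := by exact_mod_cast hm
      have : (0:ℝ) < Real.log ((m:ℝ)+1) := Real.log_pos (by linarith)
      have : (0:ℝ) < Real.log ((m:ℝ)+1) ^ ((1:ℝ)+δ) := Real.rpow_pos_of_pos this _
      nlinarith
    · have hc : (m:ℝ) ≤ (n:ℝ) := by exact_mod_cast hmn
      have h1 : (1:ℝ) ≤ (m:ℝ) := by exact_mod_cast hm
      have hlog : Real.log ((m:ℝ)+1) ≤ Real.log ((n:ℝ)+1) := by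
        apply Real.log_le_log (by linarith) (by linarith)
      have hlm : (0:ℝ) ≤ Real.log ((m:ℝ)+1) := Real.log_nonneg (by linarith)
      have := Real.rpow_le_rpow hlm hlog (by linarith : (0:ℝ) ≤ 1 + δ)
      have hln : (0:ℝ) ≤ Real.log ((n:ℝ)+1) ^ ((1:ℝ)+δ) := Real.rpow_nonneg (by linarith) _
      nlinarith
  -- now condensed
  rw [← summable_nat_add_iff 1]
  have hsum : Summable (fun n : ℕ => (1 / Real.log 2 ^ ((1:ℝ)+δ)) * (1 / |(n:ℝ) + 1| ^ ((1:ℝ)+δ))) :=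
    ((Real.summable_one_div_nat_add_rpow 1 ((1:ℝ)+δ)).2 (by linarith)).mul_left _
  apply Summable.of_nonneg_of_le (fun n => ?_) (fun n => ?_) hsum
  · apply mul_nonneg (by positivity)
    apply div_nonneg zero_le_one
    exact mul_nonneg (by positivity) (Real.rpow_nonneg (Real.log_nonneg (le_add_of_nonneg_left (by positivity))) _)
  have h2n : ((2:ℝ)^(n+1) : ℝ) ≠ 0 := by positivity
  have hcast : ((2^(n+1) : ℕ) : ℝ) = (2:ℝ)^(n+1) := by push_cast; ring
  rw [hcast, mul_one_div]
  have hlog : ((n:ℝ)+1) * Real.log 2 ≤ Real.log ((2:ℝ)^(n+1) + 1) := by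
    calc ((n:ℝ)+1) * Real.log 2 = Real.log ((2:ℝ)^(n+1)) := by
          rw [Real.log_pow]; push_cast; ring
      _ ≤ Real.log ((2:ℝ)^(n+1) + 1) := Real.log_le_log (by positivity) (by linarith)
  have hl2 : (0:ℝ) ≤ ((n:ℝ)+1) * Real.log 2 := by
    have := Real.log_pos (by norm_num : (1:ℝ) < 2)
    positivity
  have hrp : (((n:ℝ)+1) * Real.log 2) ^ ((1:ℝ)+δ) ≤ Real.log ((2:ℝ)^(n+1) + 1) ^ ((1:ℝ)+δ) :=
    Real.rpow_le_rpow hl2 hlog (by linarith)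
  have hmul : (((n:ℝ)+1) * Real.log 2) ^ ((1:ℝ)+δ) = ((n:ℝ)+1)^((1:ℝ)+δ) * Real.log 2 ^ ((1:ℝ)+δ) := by
    rw [Real.mul_rpow (by positivity) (Real.log_nonneg (by norm_num))]
  calc (2:ℝ)^(n+1) / ((2:ℝ)^(n+1) * Real.log ((2:ℝ)^(n+1) + 1) ^ ((1:ℝ)+δ))
      = 1 / Real.log ((2:ℝ)^(n+1) + 1) ^ ((1:ℝ)+δ) := by
        have hLpos : (0:ℝ) < Real.log ((2:ℝ)^(n+1)+1) :=
          Real.log_pos (by nlinarith [pow_pos (by norm_num : (0:ℝ) < 2) (n+1)])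
        have hL : Real.log ((2:ℝ)^(n+1) + 1) ^ ((1:ℝ)+δ) ≠ 0 :=
          ne_of_gt (Real.rpow_pos_of_pos hLpos _)
        field_simp
    _ ≤ 1 / (((n:ℝ)+1) * Real.log 2) ^ ((1:ℝ)+δ) := by
        apply one_div_le_one_div_of_le
        · apply Real.rpow_pos_of_pos
          have := Real.log_pos (by norm_num : (1:ℝ) < 2)
          positivity
        · exact hrp
    _ = 1 / Real.log 2 ^ ((1:ℝ)+δ) * (1 / |(n:ℝ)+1| ^ ((1:ℝ)+δ)) := by
        rw [hmul, abs_of_nonneg (by positivity : (0:ℝ) ≤ (n:ℝ)+1)]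
        rw [div_mul_div_comm, one_mul, mul_comm]

theorem statement3 (δ : ℝ) (hδ : 0 < δ) (f : ℝ → ℝ) (hf : Lip1 f) :
    Summable (fun k : ℕ =>
      |∫ x in (0:ℝ)..1, f x * haarFn (k + 1) x| * Real.sqrt ((k:ℝ) + 1) /
        Real.log ((k:ℝ) + 2) ^ ((1:ℝ) + δ)) := by
  obtain ⟨M, hM, hLip⟩ := hf
  rw [← summable_nat_add_iff 1]
  set C := Real.sqrt 2 * M with hC
  have hC0 : 0 ≤ C := mul_nonneg (Real.sqrt_nonneg _) hM.le
  have h3 : Summable (fun n : ℕ => 1 / (((n:ℝ)+2) * Real.log ((n:ℝ)+3) ^ ((1:ℝ)+δ))) := by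
    have h2 := (summable_nat_add_iff 2).2 (bertrand_sum δ hδ)
    exact h2.congr (fun n => by push_cast; ring_nf)
  have hsum : Summable (fun n : ℕ => C * (1 / (((n:ℝ)+2) * Real.log ((n:ℝ)+3) ^ ((1:ℝ)+δ)))) :=
    h3.mul_left C
  apply Summable.of_nonneg_of_le (fun n => ?_) (fun n => ?_) hsum
  · apply div_nonneg (mul_nonneg (abs_nonneg _) (Real.sqrt_nonneg _))
    exact Real.rpow_nonneg (Real.log_nonneg (by push_cast; linarith)) _
  · simp only [Nat.cast_add, Nat.cast_one]
    rw [show ((n:ℝ)+1)+1 = (n:ℝ)+2 from by ring, show ((n:ℝ)+1)+2 = (n:ℝ)+3 from by ring]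
    set s := Nat.log 2 (n+1) with hs
    have hkey := haar_integral_bound f M hM.le hLip (n+2) (by omega)
    have hsub : n + 2 - 1 = n + 1 := rfl
    rw [hsub, ← hs] at hkey
    have hub : n + 2 ≤ 2 ^ (s+1) := by
      have := Nat.lt_pow_succ_log_self (by norm_num : 1 < 2) (n+1)
      rw [← hs] at this
      omega
    have hR1 : ((n:ℝ)+2) ≤ 2 ^ (s+1) := by exact_mod_cast hub
    have hlogpos : 0 < Real.log ((n:ℝ)+3) := Real.log_pos (by linarith)
    have hL : 0 < Real.log ((n:ℝ)+3) ^ ((1:ℝ)+δ) := Real.rpow_pos_of_pos hlogpos _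
    -- numerator bound
    have e2 : Real.sqrt ((n:ℝ)+2) ≤ Real.sqrt (2 ^ (s+1)) := Real.sqrt_le_sqrt hR1
    have e3 : Real.sqrt (2 ^ s) * Real.sqrt ((2:ℝ) ^ (s+1)) = Real.sqrt 2 * 2 ^ s := by
      rw [← Real.sqrt_mul (by positivity), show (2:ℝ)^s * 2^(s+1) = 2 * ((2:ℝ)^s)^2 from by ring,
        Real.sqrt_mul (by norm_num), Real.sqrt_sq (by positivity)]
    have e4 : (M * Real.sqrt (2 ^ s) * ((1:ℝ) / 2 ^ (s+1)) ^ 2) * Real.sqrt ((2:ℝ) ^ (s+1))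
        = C / (4 * 2 ^ s) := by
      calc (M * Real.sqrt (2 ^ s) * ((1:ℝ) / 2 ^ (s+1)) ^ 2) * Real.sqrt ((2:ℝ) ^ (s+1))
          = M * (Real.sqrt (2 ^ s) * Real.sqrt ((2:ℝ) ^ (s+1))) * ((1:ℝ) / 2 ^ (s+1)) ^ 2 := by
            ring
        _ = M * (Real.sqrt 2 * 2 ^ s) * ((1:ℝ) / (2 * 2 ^ s)) ^ 2 := by
            rw [e3, show ((2:ℝ)^(s+1)) = 2 * 2 ^ s from by ring]
        _ = C / (4 * 2 ^ s) := by
            rw [hC]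
            have hp : ((2:ℝ) ^ s) ≠ 0 := by positivity
            field_simp
            ring
    have enum : |∫ x in (0:ℝ)..1, f x * haarFn (n+1+1) x| * Real.sqrt ((n:ℝ)+2)
        ≤ C / ((n:ℝ)+2) := by
      calc |∫ x in (0:ℝ)..1, f x * haarFn (n+1+1) x| * Real.sqrt ((n:ℝ)+2)
          ≤ (M * Real.sqrt (2 ^ s) * ((1:ℝ) / 2 ^ (s+1)) ^ 2) * Real.sqrt ((2:ℝ) ^ (s+1)) := by
            apply mul_le_mul hkey e2 (Real.sqrt_nonneg _)
            have : (0:ℝ) ≤ Real.sqrt (2 ^ s) := Real.sqrt_nonneg _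
            positivity
        _ = C / (4 * 2 ^ s) := e4
        _ ≤ C / ((n:ℝ)+2) := by
            apply div_le_div_of_nonneg_left hC0 (by positivity)
            have : ((2:ℝ))^(s+1) = 2 * 2 ^ s := by ring
            nlinarith [pow_pos (by norm_num : (0:ℝ) < 2) s]
    have hre : C * (1 / (((n:ℝ)+2) * Real.log ((n:ℝ)+3) ^ ((1:ℝ)+δ)))
        = (C / ((n:ℝ)+2)) / Real.log ((n:ℝ)+3) ^ ((1:ℝ)+δ) := by
      rw [mul_one_div, div_div]
    rw [hre]
    gcongr
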